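/- Let G = ℤ^d ⊕ F be a finitely generated abelian group, where d ≥ 0 and F is a finite abelian group. Then the subspace topology induced by the Chabauty space C(G) on the set IC(G) of infinite cyclic subgroups of G is discrete. -/

import Mathlib

/-- The Chabauty space of an additive topological group `G`:
the set of closed additive subgroups of `G`. -/
def ChabautySpace (G : Type*) [AddGroup G] [TopologicalSpace G] : Type _ :=
  {H : AddSubgroup G // IsClosed (H : Set G)}

/-- The Chabauty topology on the space of closed subgroups, generated by the sets
`O_K = {H | H ∩ K = ∅}` for `K` compact and `O'_U = {H | H ∩ U ≠ ∅}` for `U` open. -/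
instance ChabautySpace.instTopologicalSpace (G : Type*) [AddGroup G] [TopologicalSpace G] :
    TopologicalSpace (ChabautySpace G) :=
  TopologicalSpace.generateFrom
    ({S | ∃ K : Set G, IsCompact K ∧ S = {H : ChabautySpace G | (H.1 : Set G) ∩ K = ∅}} ∪
     {S | ∃ U : Set G, IsOpen U ∧ S = {H : ChabautySpace G | ((H.1 : Set G) ∩ U).Nonempty}})

/-- For `G = ℤ^d ⊕ F` with `F` finite abelian (a countable discrete group), the topology
induced by the Chabauty space `C(G)` on the set `IC(G)` of infinite cyclic subgroups is
discrete. -/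
theorem chabauty_infinite_cyclic_discrete
    (d : ℕ) (F : Type*) [AddCommGroup F] [Finite F] [TopologicalSpace F]
    [DiscreteTopology F] :
    DiscreteTopology {H : ChabautySpace ((Fin d → ℤ) × F) |
        (∃ g, H.1 = AddSubgroup.zmultiples g) ∧ (H.1 : Set ((Fin d → ℤ) × F)).Infinite} := by
  classical
  rw [discreteTopology_iff_isOpen_singleton]
  intro x
  obtain ⟨g, hg⟩ := x.2.1
  have hinf : (x.1.1 : Set ((Fin d → ℤ) × F)).Infinite := x.2.2
  set H : AddSubgroup ((Fin d → ℤ) × F) := x.1.1 with hHdef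
  -- the first component of `g` is nonzero
  have hg1 : g.1 ≠ 0 := by
    intro h0
    apply hinf
    apply Set.Finite.subset ((Set.finite_univ (α := F)).image (Prod.mk (0 : Fin d → ℤ)))
    intro z hz
    have hz2 : z ∈ H := hz
    rw [hg] at hz2
    obtain ⟨n, hn⟩ := AddSubgroup.mem_zmultiples_iff.mp hz2
    refine ⟨z.2, trivial, ?_⟩
    have hz1 : z.1 = 0 := by
      rw [← hn]
      show n • g.1 = 0
      rw [h0, smul_zero]
    exact Prod.ext hz1.symm rfl
  obtain ⟨j, hj⟩ : ∃ j, g.1 j ≠ 0 := Function.ne_iff.mp hg1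
  -- the set of possible generators of infinite cyclic subgroups containing g is finite
  set S : Set ((Fin d → ℤ) × F) := {h | ∃ n : ℤ, n ≠ 0 ∧ n • h = g} with hSdef
  have hdvd : ∀ h ∈ S, ∀ n : ℤ, n • h = g → n ∣ g.1 j := by
    intro h _ n hn
    refine ⟨h.1 j, ?_⟩
    have : n • h.1 = g.1 := congrArg Prod.fst hn
    have := congrArg (fun v => v j) this
    simpa using this.symm
  set f : ((Fin d → ℤ) × F) → ℤ × F := fun h =>
    (if hh : ∃ n : ℤ, n ≠ 0 ∧ n • h = g then hh.choose else 0, h.2) with hf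
  have hS : S.Finite := by
    have hfin : ({n : ℤ | n ∣ g.1 j} ×ˢ (Set.univ : Set F)).Finite := by
      refine Set.Finite.prod ?_ Set.finite_univ
      refine (Set.finite_Icc (-(|g.1 j|)) (|g.1 j|)).subset ?_
      intro n hn
      have habs : |n| ≤ |g.1 j| :=
        Int.le_of_dvd (abs_pos.mpr hj) ((abs_dvd _ _).mpr ((dvd_abs _ _).mpr hn))
      rw [Set.mem_Icc]
      exact abs_le.mp habs
    refine Set.Finite.of_finite_image (f := f) (hfin.subset ?_) ?_
    · rintro z ⟨h, hh, rfl⟩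
      have hex : ∃ n : ℤ, n ≠ 0 ∧ n • h = g := hh
      refine ⟨?_, trivial⟩
      show (if hh' : ∃ n : ℤ, n ≠ 0 ∧ n • h = g then hh'.choose else 0) ∈ {n : ℤ | n ∣ g.1 j}
      rw [dif_pos hex]
      exact hdvd h hh _ hex.choose_spec.2
    · intro a ha b hb hab
      have hexa : ∃ n : ℤ, n ≠ 0 ∧ n • a = g := ha
      have hexb : ∃ n : ℤ, n ≠ 0 ∧ n • b = g := hb
      have h1 : f a = (hexa.choose, a.2) := by rw [hf]; simp only [dif_pos hexa]
      have h2 : f b = (hexb.choose, b.2) := by rw [hf]; simp only [dif_pos hexb]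
      rw [h1, h2, Prod.mk.injEq] at hab
      obtain ⟨hn, h2eq⟩ := hab
      have ha' := hexa.choose_spec
      have hb' := hexb.choose_spec
      have h1a : hexa.choose • a.1 = g.1 := congrArg Prod.fst ha'.2
      have h1b : hexa.choose • b.1 = g.1 := by rw [hn]; exact congrArg Prod.fst hb'.2
      have h1eq : a.1 = b.1 := by
        funext k
        have := congrArg (fun v => v k) (h1a.trans h1b.symm)
        simp only [Pi.smul_apply, smul_eq_mul] at this
        exact Int.eq_of_mul_eq_mul_left ha'.1 this
      exact Prod.ext h1eq h2eq
  -- the set of infinite cyclic subgroups strictly containing H is finite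
  set T : Set (AddSubgroup ((Fin d → ℤ) × F)) :=
    {H' | (∃ h, H' = AddSubgroup.zmultiples h) ∧ (H' : Set ((Fin d → ℤ) × F)).Infinite ∧
      g ∈ H' ∧ H' ≠ H} with hTdef
  have hT : T.Finite := by
    refine (hS.image AddSubgroup.zmultiples).subset ?_
    rintro H' ⟨⟨h, rfl⟩, _, hgmem, _⟩
    obtain ⟨n, hn⟩ := AddSubgroup.mem_zmultiples_iff.mp hgmem
    refine ⟨h, ⟨n, ?_, hn⟩, rfl⟩
    intro h0
    rw [h0, zero_smul] at hn
    exact hg1 (by rw [← hn]; rfl)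
  -- choose a witness outside H for each element of T
  set xf : AddSubgroup ((Fin d → ℤ) × F) → ((Fin d → ℤ) × F) := fun H' =>
    if hh : ∃ y, y ∈ H' ∧ y ∉ H then hh.choose else 0 with hxf
  have hxfspec : ∀ H' ∈ T, xf H' ∈ H' ∧ xf H' ∉ H := by
    intro H' hH'
    obtain ⟨_, _, hgmem, hne⟩ := hH'
    have hle : H ≤ H' := by rw [hg]; exact AddSubgroup.zmultiples_le.mpr hgmem
    have hnle : ¬H' ≤ H := fun h => hne (le_antisymm h hle)
    obtain ⟨y, hy1, hy2⟩ := SetLike.not_le_iff_exists.mp hnle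
    have hex : ∃ y, y ∈ H' ∧ y ∉ H := ⟨y, hy1, hy2⟩
    rw [hxf]
    simp only [dif_pos hex]
    exact hex.choose_spec
  set K : Set ((Fin d → ℤ) × F) := xf '' T with hK
  have hKfin : K.Finite := hT.image xf
  -- the open set isolating x
  set V : Set (ChabautySpace ((Fin d → ℤ) × F)) :=
    {H' | ((H'.1 : Set ((Fin d → ℤ) × F)) ∩ {g}).Nonempty} ∩
    {H' | (H'.1 : Set ((Fin d → ℤ) × F)) ∩ K = ∅} with hV
  have hVopen : IsOpen V := by
    refine IsOpen.inter ?_ ?_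
    · exact TopologicalSpace.isOpen_generateFrom_of_mem
        (Or.inr ⟨{g}, isOpen_discrete _, rfl⟩)
    · exact TopologicalSpace.isOpen_generateFrom_of_mem
        (Or.inl ⟨K, hKfin.isCompact, rfl⟩)
  rw [isOpen_induced_iff]
  refine ⟨V, hVopen, ?_⟩
  ext y
  simp only [Set.mem_preimage, Set.mem_singleton_iff]
  constructor
  · rintro ⟨hy1, hy2⟩
    have hgmem : g ∈ y.1.1 := Set.inter_singleton_nonempty.mp hy1
    have hyeq : y.1.1 = H := by
      by_contra hne
      have hyT : y.1.1 ∈ T := ⟨y.2.1, y.2.2, hgmem, hne⟩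
      have := (hxfspec _ hyT).1
      have hmemK : xf y.1.1 ∈ K := ⟨y.1.1, hyT, rfl⟩
      exact Set.eq_empty_iff_forall_notMem.mp hy2 (xf y.1.1) ⟨this, hmemK⟩
    exact Subtype.ext (Subtype.ext hyeq)
  · rintro rfl
    constructor
    · refine Set.inter_singleton_nonempty.mpr ?_
      show g ∈ H
      rw [hg]
      exact AddSubgroup.mem_zmultiples g
    · show (H : Set ((Fin d → ℤ) × F)) ∩ K = ∅
      rw [Set.eq_empty_iff_forall_notMem]
      rintro z ⟨hz1, H', hH'T, rfl⟩
      exact (hxfspec _ hH'T).2 hz1
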